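/- Let ℂ[X] be the polynomial ring in one variable over ℂ and let A = Algebra.adjoin ℂ {X², X³} be the ℂ-subalgebra generated by X² and X³. Then the set {f ∈ ℂ[X] : f·g ∈ A for every g ∈ ℂ[X]} equals the set of polynomials divisible by X²; moreover dim_ℂ (ℂ[X]/X²ℂ[X]) = 2 = 2 · dim_ℂ (ℂ[X]/A), where ℂ[X]/A denotes the quotient of ℂ[X] by the underlying ℂ-subspace of A. -/

import Mathlib

open Polynomial

noncomputable abbrev AA : Subalgebra ℂ (Polynomial ℂ) := Algebra.adjoin ℂ ({X ^ 2, X ^ 3} : Set (Polynomial ℂ))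

lemma hXpow : ∀ m, 2 ≤ m → (X : Polynomial ℂ) ^ m ∈ AA := by
  intro m hm
  rcases Nat.even_or_odd m with ⟨k, hk⟩ | ⟨k, hk⟩
  · subst hk
    rw [show k + k = 2 * k by ring, pow_mul]
    exact pow_mem (Algebra.subset_adjoin (by simp)) k
  · have hk1 : 1 ≤ k := by omega
    obtain ⟨j, hj⟩ := Nat.exists_eq_add_of_le hk1
    subst hk hj
    rw [show 2 * (1 + j) + 1 = 3 + 2 * j by ring, pow_add, pow_mul]
    exact mul_mem (Algebra.subset_adjoin (by simp)) (pow_mem (Algebra.subset_adjoin (by simp)) j)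

lemma hX2mul : ∀ q : Polynomial ℂ, X ^ 2 * q ∈ AA := by
  intro q
  induction q using Polynomial.induction_on' with
  | add p q hp hq => rw [mul_add]; exact add_mem hp hq
  | monomial n a =>
      rw [← C_mul_X_pow_eq_monomial, mul_left_comm, ← pow_add]
      exact mul_mem (AA.algebraMap_mem a) (hXpow _ (by omega))

lemma mem_AA_iff (p : Polynomial ℂ) : p ∈ AA ↔ p.coeff 1 = 0 := by
  constructor
  · intro hp
    let S : Subalgebra ℂ (Polynomial ℂ) :=
      { carrier := {q | q.coeff 1 = 0}
        mul_mem' := by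
          intro a b ha hb
          simp only [Set.mem_setOf_eq] at *
          rw [coeff_mul]
          rw [show (1:ℕ) = 0 + 1 by rfl, Finset.Nat.sum_antidiagonal_eq_sum_range_succ_mk]
          rw [Finset.sum_range_succ, Finset.sum_range_one]
          simp [ha, hb]
        add_mem' := by intro a b ha hb; simp only [Set.mem_setOf_eq] at *; simp [ha, hb]
        algebraMap_mem' := by intro r; simp [Set.mem_setOf_eq] }
    have : AA ≤ S := Algebra.adjoin_le (by
      rintro x (rfl | rfl) <;>
      · show Polynomial.coeff _ 1 = 0
        simp [coeff_X_pow])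
    exact this hp
  · intro hp
    have hd : X ^ 2 ∣ (p - C (p.coeff 0)) := by
      rw [X_pow_dvd_iff]
      intro d hd
      interval_cases d <;> simp [hp]
    obtain ⟨h, hh⟩ := hd
    have : p = X ^ 2 * h + C (p.coeff 0) := by linear_combination hh
    rw [this]
    exact add_mem (hX2mul h) (AA.algebraMap_mem _)

lemma finrank_span_X2 :
    Module.finrank ℂ (Polynomial ℂ ⧸ Ideal.span ({X ^ 2} : Set (Polynomial ℂ))) = 2 := by
  have h2 : (X ^ 2 : Polynomial ℂ) ≠ 0 := pow_ne_zero _ X_ne_zero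
  have := (AdjoinRoot.powerBasis h2).finrank
  rw [finrank_quotient_span_eq_natDegree, natDegree_X_pow]

lemma finrank_quot_AA :
    Module.finrank ℂ (Polynomial ℂ ⧸ Subalgebra.toSubmodule AA) = 1 := by
  have hker : Subalgebra.toSubmodule AA = LinearMap.ker (Polynomial.lcoeff ℂ 1) := by
    ext p
    simp [mem_AA_iff]
  rw [hker]
  have hsurj : Function.Surjective (Polynomial.lcoeff ℂ 1) := fun c => ⟨C c * X, by simp⟩
  rw [LinearEquiv.finrank_eq ((Polynomial.lcoeff ℂ 1).quotKerEquivOfSurjective hsurj)]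
  exact Module.finrank_self ℂ

theorem cusp_is_gorenstein :
    {f : Polynomial ℂ |
        ∀ g : Polynomial ℂ, f * g ∈ Algebra.adjoin ℂ ({X ^ 2, X ^ 3} : Set (Polynomial ℂ))} =
      {f : Polynomial ℂ | X ^ 2 ∣ f} ∧
    Module.finrank ℂ (Polynomial ℂ ⧸ Ideal.span ({X ^ 2} : Set (Polynomial ℂ))) = 2 ∧
    2 = 2 * Module.finrank ℂ
      (Polynomial ℂ ⧸
        Subalgebra.toSubmodule (Algebra.adjoin ℂ ({X ^ 2, X ^ 3} : Set (Polynomial ℂ)))) := by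
  refine ⟨?_, finrank_span_X2, by rw [show Algebra.adjoin ℂ ({X ^ 2, X ^ 3} : Set (Polynomial ℂ)) = AA from rfl, finrank_quot_AA]⟩
  ext f
  simp only [Set.mem_setOf_eq]
  constructor
  · intro hf
    have h1 : f.coeff 1 = 0 := (mem_AA_iff f).mp (by simpa using hf 1)
    have h0 : f.coeff 0 = 0 := by
      have := (mem_AA_iff _).mp (hf X)
      rwa [show (1:ℕ) = 0 + 1 from rfl, coeff_mul_X] at this
    rw [X_pow_dvd_iff]
    intro d hd
    interval_cases d
    · exact h0
    · exact h1
  · rintro ⟨h, rfl⟩ g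
    rw [mul_assoc]
    exact hX2mul (h * g)
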